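/- arXiv:0911.4477 — 6 statements merged into one kernel-verified Lean document; each statement's English description precedes it below -/
import Mathlib

section
/- Let n ≥ 3 be an integer and let v : ℝ → ℝ be a twice differentiable function with 0 < v(t) ≤ 1 for all t ∈ ℝ satisfying the Delaunay ODE v''(t) − ((n−2)²/4)·v(t) + (n·(n−2)/4)·v(t)^((n+2)/(n−2)) = 0 for all t ∈ ℝ, and assume H(v(0), v'(0)) ≤ 0. Then for every t ∈ ℝ one has |v'(t)| ≤ ((n−2)/2)·v(t) and |v''(t)| ≤ (n·(n−2)/4)·v(t). -/
/-- The Hamiltonian energy of the Delaunay ODE: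
`H(v, w) = w² − ((n−2)²/4)·v² + ((n−2)²/4)·v^(2n/(n−2))`. -/
noncomputable def delaunayH (n : ℕ) (v w : ℝ) : ℝ :=
  w ^ 2 - (((n : ℝ) - 2) ^ 2 / 4) * v ^ 2
    + (((n : ℝ) - 2) ^ 2 / 4) * v ^ (2 * (n : ℝ) / ((n : ℝ) - 2))

theorem stmt_2 (n : ℕ) (hn : 3 ≤ n) (v : ℝ → ℝ)
    (hv : Differentiable ℝ v) (hv' : Differentiable ℝ (deriv v))
    (hpos : ∀ t : ℝ, 0 < v t) (hle : ∀ t : ℝ, v t ≤ 1)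
    (hode : ∀ t : ℝ, deriv (deriv v) t - (((n : ℝ) - 2) ^ 2 / 4) * v t
      + ((n : ℝ) * ((n : ℝ) - 2) / 4) * v t ^ (((n : ℝ) + 2) / ((n : ℝ) - 2)) = 0)
    (hH : delaunayH n (v 0) (deriv v 0) ≤ 0) :
    ∀ t : ℝ, |deriv v t| ≤ (((n : ℝ) - 2) / 2) * v t ∧
      |deriv (deriv v) t| ≤ ((n : ℝ) * ((n : ℝ) - 2) / 4) * v t := by
  have hn3 : (3 : ℝ) ≤ (n : ℝ) := by exact_mod_cast hn
  have hd : (0 : ℝ) < (n : ℝ) - 2 := by linarith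
  have hd' : ((n : ℝ) - 2) ≠ 0 := ne_of_gt hd
  have hcp : 2 * (n : ℝ) / ((n : ℝ) - 2) - 1 = ((n : ℝ) + 2) / ((n : ℝ) - 2) := by
    field_simp
    ring
  have hp1 : 1 ≤ ((n : ℝ) + 2) / ((n : ℝ) - 2) := by
    rw [le_div_iff₀ hd]; linarith
  -- the energy is constant
  have hder : ∀ t : ℝ, HasDerivAt (fun t => delaunayH n (v t) (deriv v t)) 0 t := by
    intro t
    have h1 : HasDerivAt v (deriv v t) t := (hv t).hasDerivAt
    have h2 : HasDerivAt (deriv v) (deriv (deriv v) t) t := (hv' t).hasDerivAt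
    have h3 : HasDerivAt (fun t => v t ^ (2 * (n : ℝ) / ((n : ℝ) - 2)))
        (deriv v t * (2 * (n : ℝ) / ((n : ℝ) - 2)) *
          v t ^ (2 * (n : ℝ) / ((n : ℝ) - 2) - 1)) t :=
      h1.rpow_const (Or.inl (hpos t).ne')
    have h4 := ((h2.pow 2).sub ((h1.pow 2).const_mul (((n : ℝ) - 2) ^ 2 / 4))).add
      (h3.const_mul (((n : ℝ) - 2) ^ 2 / 4))
    have h5 : HasDerivAt (fun t => delaunayH n (v t) (deriv v t))
        ((2 : ℕ) * deriv v t ^ (2 - 1) * deriv (deriv v) t -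
          (((n : ℝ) - 2) ^ 2 / 4) * ((2 : ℕ) * v t ^ (2 - 1) * deriv v t) +
          (((n : ℝ) - 2) ^ 2 / 4) * (deriv v t * (2 * (n : ℝ) / ((n : ℝ) - 2)) *
            v t ^ (2 * (n : ℝ) / ((n : ℝ) - 2) - 1))) t := by
      refine h4.congr_of_eventuallyEq (Filter.Eventually.of_forall fun s => ?_)
      simp [delaunayH]
    have h6 := hode t
    rw [hcp] at h5
    convert h5 using 1
    have hKc : (((n : ℝ) - 2) ^ 2 / 4) * (2 * (n : ℝ) / ((n : ℝ) - 2))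
        = 2 * ((n : ℝ) * ((n : ℝ) - 2) / 4) := by
      field_simp
    push_cast
    linear_combination (-2 * deriv v t) * h6
      + (-(deriv v t * v t ^ (((n : ℝ) + 2) / ((n : ℝ) - 2)))) * hKc
  have hEc : ∀ t : ℝ, delaunayH n (v t) (deriv v t) = delaunayH n (v 0) (deriv v 0) :=
    fun t => is_const_of_deriv_eq_zero (fun x => (hder x).differentiableAt)
      (fun x => (hder x).deriv) t 0
  intro t
  have hEt : delaunayH n (v t) (deriv v t) ≤ 0 := (hEc t).le.trans hH
  have hvp : 0 ≤ v t ^ (2 * (n : ℝ) / ((n : ℝ) - 2)) := Real.rpow_nonneg (hpos t).le _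
  have hsq : deriv v t ^ 2 ≤ ((((n : ℝ) - 2) / 2) * v t) ^ 2 := by
    unfold delaunayH at hEt
    nlinarith [hvp, sq_nonneg ((n : ℝ) - 2)]
  have hb1 : |deriv v t| ≤ (((n : ℝ) - 2) / 2) * v t := by
    have hb : 0 ≤ (((n : ℝ) - 2) / 2) * v t :=
      mul_nonneg (by linarith) (hpos t).le
    exact abs_le.mpr (abs_le_of_sq_le_sq' hsq hb)
  refine ⟨hb1, ?_⟩
  have h6 := hode t
  have hple : v t ^ (((n : ℝ) + 2) / ((n : ℝ) - 2)) ≤ v t := by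
    have := Real.rpow_le_rpow_of_exponent_ge (hpos t) (hle t) hp1
    simpa using this
  have hpnn : 0 ≤ v t ^ (((n : ℝ) + 2) / ((n : ℝ) - 2)) := Real.rpow_nonneg (hpos t).le _
  rw [abs_le]
  constructor <;> nlinarith [hpos t, (hpos t).le]
end

section
/- Let n ≥ 3 be an integer and let v : ℝ → ℝ be a twice differentiable function with v(t) > 0 for all t ∈ ℝ satisfying the Delaunay ODE v''(t) − ((n−2)²/4)·v(t) + (n·(n−2)/4)·v(t)^((n+2)/(n−2)) = 0 for all t ∈ ℝ, and assume H(v(0), v'(0)) ≤ 0. Then for every t ∈ ℝ one has v(t) ≤ v(0)·exp(((n−2)/2)·|t|). -/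
theorem stmt_3 (n : ℕ) (hn : 3 ≤ n) (v : ℝ → ℝ)
    (hv : Differentiable ℝ v) (hv' : Differentiable ℝ (deriv v))
    (hpos : ∀ t : ℝ, 0 < v t)
    (hode : ∀ t : ℝ, deriv (deriv v) t - (((n : ℝ) - 2) ^ 2 / 4) * v t
      + ((n : ℝ) * ((n : ℝ) - 2) / 4) * v t ^ (((n : ℝ) + 2) / ((n : ℝ) - 2)) = 0)
    (hH : delaunayH n (v 0) (deriv v 0) ≤ 0) :
    ∀ t : ℝ, v t ≤ v 0 * Real.exp ((((n : ℝ) - 2) / 2) * |t|) := by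
  set m : ℝ := (n : ℝ) with hm
  have hm3 : (3 : ℝ) ≤ m := by rw [hm]; exact_mod_cast hn
  have hm2 : (0 : ℝ) < m - 2 := by linarith
  have hm2' : m - 2 ≠ 0 := ne_of_gt hm2
  set c : ℝ := (m - 2) ^ 2 / 4 with hc
  set q : ℝ := 2 * m / (m - 2) with hq
  set p : ℝ := (m + 2) / (m - 2) with hp
  have hqp : q - 1 = p := by rw [hq, hp, div_sub_one hm2']; ring
  set E : ℝ → ℝ := fun t => delaunayH n (v t) (deriv v t) with hE
  -- energy conservation
  have hEderiv : ∀ t : ℝ, HasDerivAt E 0 t := by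
    intro t
    have h1 : HasDerivAt (fun t => (deriv v t) ^ 2)
        (2 * deriv v t ^ 1 * deriv (deriv v) t) t := ((hv' t).hasDerivAt).pow 2
    have h2 : HasDerivAt (fun t => (v t) ^ 2) (2 * v t ^ 1 * deriv v t) t :=
      ((hv t).hasDerivAt).pow 2
    have h3 : HasDerivAt (fun t => (v t) ^ q) (q * v t ^ (q - 1) * deriv v t) t :=
      by simpa [mul_comm, mul_assoc, mul_left_comm] using
        HasDerivAt.rpow_const ((hv t).hasDerivAt) (Or.inl (hpos t).ne') (p := q)
    have h : HasDerivAt E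
        (2 * deriv v t ^ 1 * deriv (deriv v) t - c * (2 * v t ^ 1 * deriv v t)
          + c * (q * v t ^ (q - 1) * deriv v t)) t := by
      have := (h1.sub (h2.const_mul c)).add (h3.const_mul c)
      exact this
    have hode' : deriv (deriv v) t = c * v t - (m * (m - 2) / 4) * v t ^ p := by
      linarith [hode t]
    have hz : 2 * deriv v t ^ 1 * deriv (deriv v) t - c * (2 * v t ^ 1 * deriv v t)
        + c * (q * v t ^ (q - 1) * deriv v t) = 0 := by
      rw [hode', hqp, hc, hq]
      field_simp
      ring
    rwa [hz] at h
  have hEconst : ∀ t : ℝ, E t = E 0 :=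
    fun t => is_const_of_deriv_eq_zero
      (fun x => (hEderiv x).differentiableAt)
      (fun x => (hEderiv x).deriv) t 0
  have hEle : ∀ t : ℝ, E t ≤ 0 := fun t => (hEconst t) ▸ hH
  -- |v'| ≤ ((m-2)/2) * v
  set k : ℝ := (m - 2) / 2 with hk
  have hk0 : 0 ≤ k := by positivity
  have hbound : ∀ t : ℝ, |deriv v t| ≤ k * v t := by
    intro t
    have hE0 := hEle t
    have hrp : 0 ≤ v t ^ q := (Real.rpow_pos_of_pos (hpos t) q).le
    have hsq : deriv v t ^ 2 ≤ (k * v t) ^ 2 := by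
      have : E t = deriv v t ^ 2 - c * v t ^ 2 + c * v t ^ q := rfl
      rw [this] at hE0
      have hck : (k * v t) ^ 2 = c * v t ^ 2 := by rw [hk, hc]; ring
      nlinarith [mul_nonneg (le_of_lt (div_pos (pow_pos hm2 2) (by norm_num) : (0:ℝ) < c)) hrp]
    calc |deriv v t| = Real.sqrt (deriv v t ^ 2) := (Real.sqrt_sq_eq_abs _).symm
      _ ≤ Real.sqrt ((k * v t) ^ 2) := Real.sqrt_le_sqrt hsq
      _ = |k * v t| := Real.sqrt_sq_eq_abs _
      _ = k * v t := abs_of_nonneg (mul_nonneg hk0 (hpos t).le)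
  -- log v is k-Lipschitz
  set g : ℝ → ℝ := fun t => Real.log (v t) with hg
  have hgd : ∀ t : ℝ, HasDerivAt g (deriv v t / v t) t := by
    intro t
    rw [div_eq_inv_mul]; exact
      (Real.hasDerivAt_log (hpos t).ne').comp t (hv t).hasDerivAt
  have hgd' : ∀ t : ℝ, ‖deriv v t / v t‖ ≤ k := by
    intro t
    rw [Real.norm_eq_abs, abs_div, abs_of_pos (hpos t), div_le_iff₀ (hpos t)]
    exact hbound t
  intro t
  have hlip : ‖g t - g 0‖ ≤ k * ‖t - 0‖ := by
    apply Convex.norm_image_sub_le_of_norm_hasDerivWithin_le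
      (fun x _ => (hgd x).hasDerivWithinAt) (fun x _ => hgd' x)
      convex_univ (Set.mem_univ 0) (Set.mem_univ t)
  have hgle : g t ≤ g 0 + k * |t| := by
    have : g t - g 0 ≤ |g t - g 0| := le_abs_self _
    simp only [Real.norm_eq_abs, sub_zero] at hlip
    linarith
  have : v t = Real.exp (g t) := (Real.exp_log (hpos t)).symm
  rw [this]
  have hv0 : v 0 * Real.exp (k * |t|) = Real.exp (g 0 + k * |t|) := by
    rw [Real.exp_add, Real.exp_log (hpos 0)]
  rw [hk] at hv0
  rw [hv0]
  exact Real.exp_le_exp.mpr (by rw [← hk]; exact hgle)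
end

section
/- Let n ≥ 3 be an integer and let v : ℝ → ℝ be a twice differentiable function with v(t) > 0 for all t ∈ ℝ satisfying the Delaunay ODE v''(t) − ((n−2)²/4)·v(t) + (n·(n−2)/4)·v(t)^((n+2)/(n−2)) = 0 for all t ∈ ℝ, and assume H(v(0), v'(0)) < 0. Then v(t) < 1 for every t ∈ ℝ. -/
theorem stmt_4 (n : ℕ) (hn : 3 ≤ n) (v : ℝ → ℝ)
    (hv : Differentiable ℝ v) (hv' : Differentiable ℝ (deriv v))
    (hpos : ∀ t : ℝ, 0 < v t)
    (hode : ∀ t : ℝ, deriv (deriv v) t - (((n : ℝ) - 2) ^ 2 / 4) * v t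
      + ((n : ℝ) * ((n : ℝ) - 2) / 4) * v t ^ (((n : ℝ) + 2) / ((n : ℝ) - 2)) = 0)
    (hH : delaunayH n (v 0) (deriv v 0) < 0) :
    ∀ t : ℝ, v t < 1 := by
  have hn2 : (2:ℝ) < (n:ℝ) := by exact_mod_cast hn.trans_lt' (by norm_num)
  have hne : (n:ℝ) - 2 ≠ 0 := by linarith
  set c : ℝ := ((n:ℝ) - 2) ^ 2 / 4 with hc
  set K : ℝ := (n:ℝ) * ((n:ℝ) - 2) / 4 with hK
  set p : ℝ := 2 * (n:ℝ) / ((n:ℝ) - 2) with hp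
  have hpq : p - 1 = ((n:ℝ) + 2) / ((n:ℝ) - 2) := by
    rw [hp, div_sub_one hne]
    ring
  have hcp : c * p = 2 * K := by
    rw [hc, hp, hK, div_mul_div_comm, div_eq_iff (mul_ne_zero (by norm_num) hne)]
    ring
  set h : ℝ → ℝ := fun t => delaunayH n (v t) (deriv v t) with hh
  -- derivative of h is zero
  have hderiv : ∀ t : ℝ, HasDerivAt h 0 t := by
    intro t
    have hvt := (hv t).hasDerivAt
    have hwt := (hv' t).hasDerivAt
    have h1 : HasDerivAt (fun s => deriv v s ^ 2)
        (2 * deriv v t * deriv (deriv v) t) t := by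
      simpa [mul_comm] using hwt.fun_pow 2
    have h2 : HasDerivAt (fun s => v s ^ 2) (2 * v t * deriv v t) t := by
      simpa [mul_comm] using hvt.fun_pow 2
    have h3 : HasDerivAt (fun s => v s ^ p)
        (deriv v t * p * v t ^ (p - 1)) t :=
      hvt.rpow_const (Or.inl (hpos t).ne')
    have := ((h1.fun_sub (h2.const_mul c)).fun_add ((h3.const_mul c)))
    have hD : 2 * deriv v t * deriv (deriv v) t - c * (2 * v t * deriv v t)
        + c * (deriv v t * p * v t ^ (p - 1)) = 0 := by
      have hode_t := hode t
      rw [hpq]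
      linear_combination (2 * deriv v t) * hode_t
        + deriv v t * v t ^ (((n:ℝ) + 2) / ((n:ℝ) - 2)) * hcp
    rw [hD] at this
    simpa [hh, delaunayH, hc, hp] using this
  have hconst : ∀ t : ℝ, h t = h 0 := by
    intro t
    have hdiff : Differentiable ℝ h := fun t => (hderiv t).differentiableAt
    exact is_const_of_deriv_eq_zero hdiff (fun x => (hderiv x).deriv) t 0
  intro t
  by_contra hle
  push_neg at hle
  have hvt1 : (1:ℝ) ≤ v t := hle
  have hpow : v t ^ (2:ℝ) ≤ v t ^ p := by
    apply Real.rpow_le_rpow_of_exponent_le hvt1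
    rw [hp, le_div_iff₀ (by linarith : (0:ℝ) < (n:ℝ) - 2)]
    linarith
  have h2p : v t ^ (2:ℝ) = v t ^ 2 := by
    rw [show (2:ℝ) = ((2:ℕ):ℝ) by norm_num, Real.rpow_natCast]
  have hht : h t < 0 := by rw [hconst t]; exact hH
  have hc0 : 0 < c := by positivity
  have : (0:ℝ) ≤ h t := by
    have : c * v t ^ 2 ≤ c * v t ^ p := by
      rw [← h2p]; exact mul_le_mul_of_nonneg_left hpow hc0.le
    have hsq : 0 ≤ deriv v t ^ 2 := sq_nonneg _
    simp only [hh, delaunayH, ← hc, ← hp]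
    linarith
  linarith
end

section
/- Let n ≥ 3 be an integer and let v : ℝ → ℝ be a positive, twice continuously differentiable function satisfying the Delaunay ODE v''(t) − ((n−2)²/4)·v(t) + (n·(n−2)/4)·v(t)^((n+2)/(n−2)) = 0 for all t ∈ ℝ. Define u on ℝⁿ \ {0} by u(x) = ‖x‖^((2−n)/2) · v(−log ‖x‖). Then u is positive, twice continuously differentiable on ℝⁿ \ {0}, and satisfies Δu(x) + (n·(n−2)/4)·u(x)^((n+2)/(n−2)) = 0 for all x ≠ 0, where Δu denotes the Euclidean Laplacian of u (the sum of its second partial derivatives). -/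
theorem aux_hasDerivAt (b : ℝ) (w : ℝ → ℝ) (hw : Differentiable ℝ w) {s : ℝ} (hs : 0 < s) :
    HasDerivAt (fun s : ℝ => s ^ b * w (-(Real.log s)/2))
      (s ^ (b-1) * (b * w (-(Real.log s)/2) - deriv w (-(Real.log s)/2) / 2)) s := by
  have h1 : HasDerivAt (fun s : ℝ => s ^ b) (b * s ^ (b-1)) s :=
    Real.hasDerivAt_rpow_const (Or.inl hs.ne')
  have h2 : HasDerivAt (fun s : ℝ => -(Real.log s)/2) (-s⁻¹/2) s :=
    ((Real.hasDerivAt_log hs.ne').neg).div_const 2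
  have h3 : HasDerivAt (fun s : ℝ => w (-(Real.log s)/2))
      (deriv w (-(Real.log s)/2) * (-s⁻¹/2)) s :=
    ((hw _).hasDerivAt).comp s h2
  have := h1.mul h3
  have hsb : s ^ (b-1) = s ^ b * s⁻¹ := by
    rw [Real.rpow_sub hs, Real.rpow_one]; field_simp
  refine this.congr_deriv ?_
  rw [hsb]; ring

noncomputable def GG (a2 : ℝ) (v : ℝ → ℝ) (s : ℝ) : ℝ := s ^ a2 * v (-(Real.log s)/2)

noncomputable def GG1 (a2 : ℝ) (v : ℝ → ℝ) (s : ℝ) : ℝ :=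
  s ^ (a2 - 1) * (a2 * v (-(Real.log s)/2) - deriv v (-(Real.log s)/2) / 2)

noncomputable def GG2 (a2 : ℝ) (v : ℝ → ℝ) (s : ℝ) : ℝ :=
  s ^ (a2 - 2) * ((a2 - 1) * (a2 * v (-(Real.log s)/2) - deriv v (-(Real.log s)/2) / 2)
    - (a2 / 2) * deriv v (-(Real.log s)/2) + deriv (deriv v) (-(Real.log s)/2) / 4)

theorem GG_hasDerivAt (a2 : ℝ) (v : ℝ → ℝ) (hC2 : ContDiff ℝ 2 v) {s : ℝ} (hs : 0 < s) :
    HasDerivAt (GG a2 v) (GG1 a2 v s) s :=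
  aux_hasDerivAt a2 v (hC2.differentiable (by norm_num)) hs

theorem GG1_hasDerivAt (a2 : ℝ) (v : ℝ → ℝ) (hC2 : ContDiff ℝ 2 v) {s : ℝ} (hs : 0 < s) :
    HasDerivAt (GG1 a2 v) (GG2 a2 v s) s := by
  have hv1 : ContDiff ℝ 1 (deriv v) := by
    have := (contDiff_succ_iff_deriv.mp (by exact_mod_cast hC2 : ContDiff ℝ (1+1) v)).2.2
    exact this
  have hw : Differentiable ℝ (fun t => a2 * v t - deriv v t / 2) :=
    ((hC2.differentiable (by norm_num)).const_mul a2).sub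
      ((hv1.differentiable one_ne_zero).div_const 2)
  have hder : ∀ t : ℝ, deriv (fun t => a2 * v t - deriv v t / 2) t
      = a2 * deriv v t - deriv (deriv v) t / 2 := by
    intro t
    have h1 : HasDerivAt v (deriv v t) t := (hC2.differentiable (by norm_num) t).hasDerivAt
    have h2 : HasDerivAt (deriv v) (deriv (deriv v) t) t :=
      (hv1.differentiable one_ne_zero t).hasDerivAt
    exact ((h1.const_mul a2).sub (h2.div_const 2)).deriv
  have := aux_hasDerivAt (a2 - 1) (fun t => a2 * v t - deriv v t / 2) hw hs
  rw [hder] at this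
  refine this.congr_deriv ?_
  unfold GG2
  have : a2 - 1 - 1 = a2 - 2 := by ring
  rw [this]; ring

theorem test : True := trivial




open EuclideanSpace in
/-- The Euclidean Laplacian: the sum of the second partial derivatives. -/
noncomputable def lap {n : ℕ} (u : EuclideanSpace ℝ (Fin n) → ℝ)
    (x : EuclideanSpace ℝ (Fin n)) : ℝ :=
  ∑ i : Fin n,
    fderiv ℝ (fun y => fderiv ℝ u y (EuclideanSpace.single i 1)) x
      (EuclideanSpace.single i 1)

theorem stmt_9 (n : ℕ) (hn : 3 ≤ n) (v : ℝ → ℝ)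
    (hpos : ∀ t : ℝ, 0 < v t) (hC2 : ContDiff ℝ 2 v)
    (hode : ∀ t : ℝ, deriv (deriv v) t - (((n : ℝ) - 2) ^ 2 / 4) * v t
      + ((n : ℝ) * ((n : ℝ) - 2) / 4) * v t ^ (((n : ℝ) + 2) / ((n : ℝ) - 2)) = 0)
    (u : EuclideanSpace ℝ (Fin n) → ℝ)
    (hu : ∀ x : EuclideanSpace ℝ (Fin n), x ≠ 0 →
      u x = ‖x‖ ^ ((2 - (n : ℝ)) / 2) * v (-Real.log ‖x‖)) :
    (∀ x : EuclideanSpace ℝ (Fin n), x ≠ 0 → 0 < u x) ∧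
    ContDiffOn ℝ 2 u {(0 : EuclideanSpace ℝ (Fin n))}ᶜ ∧
    ∀ x : EuclideanSpace ℝ (Fin n), x ≠ 0 →
      lap u x + ((n : ℝ) * ((n : ℝ) - 2) / 4) * u x ^ (((n : ℝ) + 2) / ((n : ℝ) - 2)) = 0 := by
  set a2 : ℝ := (2 - (n:ℝ)) / 4 with ha2
  have hn2 : (n:ℝ) - 2 ≠ 0 := by
    have : (3:ℝ) ≤ (n:ℝ) := by exact_mod_cast hn
    intro h; linarith
  have key : ∀ y : EuclideanSpace ℝ (Fin n), y ≠ 0 → u y = GG a2 v (‖y‖^2) := by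
    intro y hy
    have hny : (0:ℝ) < ‖y‖ := norm_pos_iff.mpr hy
    rw [hu y hy]
    unfold GG
    congr 1
    · rw [← Real.rpow_natCast ‖y‖ 2, ← Real.rpow_mul (norm_nonneg y)]
      congr 1
      push_cast [ha2]; ring
    · congr 1
      rw [Real.log_pow]
      push_cast; ring
  refine ⟨fun x hx => ?_, ?_, fun x hx => ?_⟩
  · rw [hu x hx]
    exact mul_pos (Real.rpow_pos_of_pos (norm_pos_iff.mpr hx) _) (hpos _)
  · -- ContDiffOn
    have hGcd : ContDiffOn ℝ 2 (GG a2 v) (Set.Ioi 0) := by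
      intro s hs
      have hs' : (0:ℝ) < s := hs
      have h1 : ContDiffAt ℝ 2 (fun s : ℝ => s ^ a2) s :=
        Real.contDiffAt_rpow_const_of_ne hs'.ne'
      have h2 : ContDiffAt ℝ 2 (fun s : ℝ => -(Real.log s)/2) s :=
        ((Real.contDiffAt_log.mpr hs'.ne').neg).div_const 2
      exact (h1.mul ((hC2.contDiffAt).comp s h2)).contDiffWithinAt
    have hq : ContDiff ℝ 2 (fun y : EuclideanSpace ℝ (Fin n) => ‖y‖^2) :=
      contDiff_norm_sq ℝ
    have hcomp : ContDiffOn ℝ 2 ((GG a2 v) ∘ (fun y : EuclideanSpace ℝ (Fin n) => ‖y‖^2))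
        {(0 : EuclideanSpace ℝ (Fin n))}ᶜ := by
      refine hGcd.comp hq.contDiffOn ?_
      intro y hy
      have : y ≠ 0 := hy
      exact pow_pos (norm_pos_iff.mpr this) 2
    exact hcomp.congr (fun y hy => key y hy)
  · -- Laplacian
    have hs : (0:ℝ) < ‖x‖^2 := pow_pos (norm_pos_iff.mpr hx) 2
    set s : ℝ := ‖x‖^2 with hsdef
    have hqx : ∀ y : EuclideanSpace ℝ (Fin n),
        HasFDerivAt (fun z : EuclideanSpace ℝ (Fin n) => ‖z‖^2) (2 • innerSL ℝ y) y := by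
      intro y
      simpa using (hasFDerivAt_id y).norm_sq
    have hd1 : ∀ y : EuclideanSpace ℝ (Fin n), y ≠ 0 →
        HasFDerivAt u (GG1 a2 v (‖y‖^2) • (2 • innerSL ℝ y)) y := by
      intro y hy
      have := (GG_hasDerivAt a2 v hC2 (pow_pos (norm_pos_iff.mpr hy) 2)).comp_hasFDerivAt y (hqx y)
      refine this.congr_of_eventuallyEq ?_
      exact Filter.eventuallyEq_of_mem (isOpen_compl_singleton.mem_nhds hy)
        (fun z hz => key z hz)
    have hfd : ∀ y : EuclideanSpace ℝ (Fin n), y ≠ 0 → ∀ i : Fin n,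
        fderiv ℝ u y (EuclideanSpace.single i 1) = GG1 a2 v (‖y‖^2) * (2 * y i) := by
      intro y hy i
      rw [(hd1 y hy).fderiv]
      simp [EuclideanSpace.inner_single_right, real_inner_comm]
    have h2nd : ∀ i : Fin n,
        fderiv ℝ (fun y => fderiv ℝ u y (EuclideanSpace.single i 1)) x
          (EuclideanSpace.single i 1)
        = GG2 a2 v s * (2 * x i) * (2 * x i) + GG1 a2 v s * 2 := by
      intro i
      have hA : HasFDerivAt (fun y : EuclideanSpace ℝ (Fin n) => GG1 a2 v (‖y‖^2))
          (GG2 a2 v s • (2 • innerSL ℝ x)) x :=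
        by have := (GG1_hasDerivAt a2 v hC2 hs).comp_hasFDerivAt x (hqx x); exact this
      have hB : HasFDerivAt (fun y : EuclideanSpace ℝ (Fin n) => 2 * y i)
          ((2:ℝ) • (EuclideanSpace.proj i : EuclideanSpace ℝ (Fin n) →L[ℝ] ℝ)) x :=
        ((EuclideanSpace.proj i : EuclideanSpace ℝ (Fin n) →L[ℝ] ℝ).hasFDerivAt).const_mul (2:ℝ)
      have hW := hA.mul hB
      have heq : (fun y => fderiv ℝ u y (EuclideanSpace.single i 1))
          =ᶠ[nhds x] fun y : EuclideanSpace ℝ (Fin n) => GG1 a2 v (‖y‖^2) * (2 * y i) :=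
        Filter.eventuallyEq_of_mem (isOpen_compl_singleton.mem_nhds hx)
          (fun z hz => hfd z hz i)
      rw [heq.fderiv_eq, show (fun y : EuclideanSpace ℝ (Fin n) => GG1 a2 v (‖y‖^2) * (2 * y i)) = (fun y => GG1 a2 v (‖y‖^2)) * (fun y => 2 * y i) from rfl, hW.fderiv]
      have hsingle : (EuclideanSpace.single i (1:ℝ)) i = 1 := by
        simp [EuclideanSpace.single_apply]
      simp [EuclideanSpace.inner_single_right, hsingle]
      ring
    have hsum : ∑ i : Fin n, (x i)^2 = s := by
      rw [hsdef, EuclideanSpace.norm_eq, Real.sq_sqrt (by positivity)]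
      simp [sq_abs]
    have hlap : lap u x = 4 * s * GG2 a2 v s + 2 * n * GG1 a2 v s := by
      unfold lap
      rw [Finset.sum_congr rfl (fun i _ => h2nd i)]
      rw [Finset.sum_add_distrib, Finset.sum_const, Finset.card_univ, Fintype.card_fin]
      have : ∑ i : Fin n, GG2 a2 v s * (2 * x i) * (2 * x i)
          = 4 * GG2 a2 v s * ∑ i : Fin n, (x i)^2 := by
        rw [Finset.mul_sum]
        exact Finset.sum_congr rfl (fun i _ => by ring)
      rw [this, hsum]
      push_cast; ring
    rw [hlap, key x hx]
    -- now pure 1D algebra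
    have hup : (GG a2 v s) ^ (((n:ℝ)+2)/((n:ℝ)-2))
        = s ^ (a2 - 1) * (v (-(Real.log s)/2)) ^ (((n:ℝ)+2)/((n:ℝ)-2)) := by
      unfold GG
      rw [Real.mul_rpow (Real.rpow_nonneg hs.le _) (hpos _).le,
        ← Real.rpow_mul hs.le]
      congr 2
      field_simp [ha2]
      ring
    rw [hup]
    unfold GG1 GG2
    have hmul : s ^ (a2 - 2) * s = s ^ (a2 - 1) := by
      rw [show a2 - 1 = (a2 - 2) + 1 by ring, Real.rpow_add hs, Real.rpow_one]
    have hodet := hode (-(Real.log s)/2)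
    set V := v (-(Real.log s)/2)
    set V1 := deriv v (-(Real.log s)/2)
    set V2 := deriv (deriv v) (-(Real.log s)/2)
    have expand : 4 * s * (s ^ (a2-2) * ((a2-1)*(a2*V - V1/2) - (a2/2)*V1 + V2/4))
        = s ^ (a2-1) * (4*((a2-1)*(a2*V - V1/2) - (a2/2)*V1 + V2/4)) := by
      rw [← hmul]; ring
    rw [expand, ha2]
    have : (2 - (n:ℝ))/4 - 1 = -((n:ℝ)+2)/4 := by ring
    rw [this]
    set S := s ^ (-((n:ℝ)+2)/4)
    set P := V ^ (((n:ℝ)+2)/((n:ℝ)-2))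
    linear_combination S * hodet
end

section
/- Let n ≥ 3 be an integer, let r, ε, Λ > 0, and let F, G : ℝ × ℝ → ℝ be continuous functions. Let D = {(b, λ) ∈ ℝ × ℝ : |b| ≤ 1/2 and |λ| ≤ Λ}. Assume that for every (b, λ) ∈ D one has |F(b,λ)| + |G(b,λ)|/(n−2) ≤ 1/2 and ε²/2 + r^(n−2)·|G(b,λ)|/(n−2) ≤ Λ. Then there exists (b, λ) ∈ D such that b + (ε²/(4·(1+b)) − λ)·r^(2−n) = F(b,λ) and (2−n)·(ε²/(4·(1+b)) − λ)·r^(2−n) = G(b,λ). -/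
open Complex Finset

private lemma int_mult_constant {W : ℝ → ℝ} (hW : Continuous W)
    (hint : ∀ u, ∃ m : ℤ, W u = m * (2 * Real.pi)) : W 1 = W 0 := by
  have hpi : (0:ℝ) < 2 * Real.pi := by positivity
  have hloc : ∀ u₀ : ℝ, ∀ᶠ u in nhds u₀, W u = W u₀ := by
    intro u₀
    have h2 : ∀ᶠ u in nhds u₀, |W u - W u₀| < 2 * Real.pi := by
      have := Metric.tendsto_nhds.1 (hW.tendsto u₀) (2 * Real.pi) hpi
      filter_upwards [this] with u hu
      simpa [Real.dist_eq] using hu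
    filter_upwards [h2] with u hu
    obtain ⟨m, hm⟩ := hint u
    obtain ⟨m₀, hm₀⟩ := hint u₀
    rw [hm, hm₀] at hu ⊢
    have habs : |(m : ℝ) - m₀| < 1 := by
      rw [← sub_mul, abs_mul, abs_of_pos hpi] at hu
      nlinarith [abs_nonneg ((m:ℝ) - m₀)]
    have : |m - m₀| < 1 := by exact_mod_cast (by push_cast; exact habs : |((m - m₀ : ℤ) : ℝ)| < 1)
    have : m = m₀ := by rw [abs_lt] at this; omega
    rw [this]
  have hclopen : IsClopen {u : ℝ | W u = W 0} := by
    constructor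
    · exact isClosed_eq hW continuous_const
    · rw [isOpen_iff_mem_nhds]
      intro u₀ hu₀
      filter_upwards [hloc u₀] with u hu
      simp only [Set.mem_setOf_eq] at hu₀ ⊢
      rw [hu, hu₀]
  have h0 : (0:ℝ) ∈ {u : ℝ | W u = W 0} := rfl
  rcases isClopen_iff.1 hclopen with h | h
  · rw [h] at h0; exact absurd h0 (Set.notMem_empty _)
  · have : (1:ℝ) ∈ {u : ℝ | W u = W 0} := h ▸ Set.mem_univ _
    exact this

private lemma brouwer_disc (f : ℂ → ℂ) (hc : Continuous f)
    (hf : ∀ z, ‖z‖ ≤ 1 → ‖f z‖ ≤ 1) :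
    ∃ z, ‖z‖ ≤ 1 ∧ f z = z := by
  by_contra hfix
  push_neg at hfix
  -- the unit loop
  set e : ℝ → ℂ := fun θ => Complex.exp (((2 * Real.pi * θ : ℝ) : ℂ) * I) with he
  have he_abs : ∀ θ, ‖e θ‖ = 1 := fun θ => Complex.norm_exp_ofReal_mul_I _
  have he_cont : Continuous e := by
    apply Complex.continuous_exp.comp
    exact (Complex.continuous_ofReal.comp (by continuity)).mul continuous_const
  have he10 : e 1 = e 0 := by
    simp only [he]
    rw [mul_one, mul_zero, Complex.ofReal_zero, zero_mul, Complex.exp_zero,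
      show ((2 * Real.pi : ℝ) : ℂ) * I = 2 * (Real.pi : ℂ) * I by push_cast; ring,
      Complex.exp_two_pi_mul_I]
  -- clamping
  set cl : ℝ → ℝ := fun u => max 0 (min 1 u) with hcl
  have hcl0 : ∀ u, 0 ≤ cl u := fun u => le_max_left _ _
  have hcl1 : ∀ u, cl u ≤ 1 := fun u => max_le (by norm_num) (min_le_left _ _)
  have hcl_id : ∀ u, 0 ≤ u → u ≤ 1 → cl u = u := by
    intro u h0 h1; simp only [hcl]; rw [min_eq_right h1, max_eq_right h0]
  have hcl_cont : Continuous cl := continuous_const.max (continuous_const.min continuous_id)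
  have hidem : ∀ u, cl (cl u) = cl u := fun u => hcl_id _ (hcl0 u) (hcl1 u)
  -- the homotopy
  set H : ℝ × ℝ → ℂ := fun p =>
    if cl p.1 ≤ 1/2 then f (((2 * cl p.1 : ℝ) : ℂ) * e p.2) - ((2 * cl p.1 : ℝ) : ℂ) * e p.2
    else ((2 - 2 * cl p.1 : ℝ) : ℂ) * f (e p.2) - e p.2 with hH
  have hecont2 : Continuous fun p : ℝ × ℝ => e p.2 := he_cont.comp continuous_snd
  have hclcont2 : Continuous fun p : ℝ × ℝ => ((2 * cl p.1 : ℝ) : ℂ) :=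
    Complex.continuous_ofReal.comp ((continuous_const.mul hcl_cont).comp continuous_fst)
  have Hcont : Continuous H := by
    apply Continuous.if_le
    · exact (hc.comp (hclcont2.mul hecont2)).sub (hclcont2.mul hecont2)
    · refine (Continuous.mul ?_ (hc.comp hecont2)).sub hecont2
      exact Complex.continuous_ofReal.comp
        ((continuous_const.sub (continuous_const.mul hcl_cont)).comp continuous_fst)
    · exact (hcl_cont.comp continuous_fst)
    · exact continuous_const
    · intro p hp
      rw [hp]
      try norm_num
  -- nonvanishing
  have Hne : ∀ p, H p ≠ 0 := by
    intro p
    simp only [hH]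
    by_cases h : cl p.1 ≤ 1/2
    · rw [if_pos h]
      have habs : ‖((2 * cl p.1 : ℝ) : ℂ) * e p.2‖ ≤ 1 := by
        rw [norm_mul, he_abs, mul_one, Complex.norm_real, Real.norm_eq_abs, _root_.abs_of_nonneg (by nlinarith [hcl0 p.1])]
        nlinarith
      exact sub_ne_zero.mpr (hfix _ habs)
    · rw [if_neg h]
      push_neg at h
      intro h0
      have heq : ((2 - 2 * cl p.1 : ℝ) : ℂ) * f (e p.2) = e p.2 := by
        rwa [sub_eq_zero] at h0
      have := congrArg (norm : ℂ → ℝ) heq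
      rw [norm_mul, he_abs, Complex.norm_real, Real.norm_eq_abs] at this
      have hfe : ‖f (e p.2)‖ ≤ 1 := hf _ (le_of_eq (he_abs p.2))
      have ht0 : (0:ℝ) ≤ 2 - 2 * cl p.1 := by nlinarith [hcl1 p.1]
      rw [_root_.abs_of_nonneg ht0] at this
      nlinarith [norm_nonneg (f (e p.2))]
  have Hclamp : ∀ u θ : ℝ, H (u, θ) = H (cl u, θ) := by
    intro u θ
    simp only [hH, hidem]
  -- compact set, minimum of |H|, uniform continuity
  set K : Set (ℝ × ℝ) := Set.Icc 0 1 ×ˢ Set.Icc 0 1 with hK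
  have hKcomp : IsCompact K := isCompact_Icc.prod isCompact_Icc
  obtain ⟨p₀, hp₀K, hp₀min⟩ := hKcomp.exists_isMinOn ⟨(0,0), by
      constructor <;> simp [Set.mem_Icc]⟩ ((continuous_norm.comp Hcont).continuousOn)
  set δ : ℝ := ‖H p₀‖ with hδdef
  have hδ : 0 < δ := norm_pos_iff.mpr (Hne p₀)
  have hmin : ∀ q ∈ K, δ ≤ ‖H q‖ := fun q hq => hp₀min hq
  obtain ⟨η, hη, hcontr⟩ := Metric.uniformContinuousOn_iff.1
    (hKcomp.uniformContinuousOn_of_continuous Hcont.continuousOn) δ hδ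
  obtain ⟨N, hNr⟩ := exists_nat_gt (max 3 (1/η))
  have hN3 : 3 ≤ N := by
    have h3 : (3:ℝ) < N := lt_of_le_of_lt (le_max_left _ _) hNr
    exact_mod_cast h3.le
  have hN0 : (0:ℝ) < N := by
    have h3 : (3:ℝ) < N := lt_of_le_of_lt (le_max_left _ _) hNr
    linarith
  have hNη : 1 / (N:ℝ) < η := by
    rw [div_lt_iff₀ hN0]
    have := (div_lt_iff₀ hη).1 (lt_of_le_of_lt (le_max_right _ _) hNr)
    linarith
  -- key step estimate
  have hstep : ∀ (u θ θ' : ℝ), θ ∈ Set.Icc (0:ℝ) 1 → θ' ∈ Set.Icc (0:ℝ) 1 →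
      |θ - θ'| ≤ 1 / N → ‖H (u, θ) - H (u, θ')‖ < δ := by
    intro u θ θ' hθ hθ' hd
    rw [Hclamp u θ, Hclamp u θ']
    have hmem : (cl u, θ) ∈ K := ⟨⟨hcl0 u, hcl1 u⟩, hθ⟩
    have hmem' : (cl u, θ') ∈ K := ⟨⟨hcl0 u, hcl1 u⟩, hθ'⟩
    have hdist : dist ((cl u, θ) : ℝ × ℝ) (cl u, θ') < η := by
      rw [Prod.dist_eq]
      simp only [dist_self]
      rw [max_eq_right dist_nonneg, Real.dist_eq]
      exact lt_of_le_of_lt hd hNη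
    have := hcontr _ hmem _ hmem' hdist
    rwa [Complex.dist_eq] at this
  have hmemI : ∀ k : ℕ, k ≤ N → ((k:ℝ)/N) ∈ Set.Icc (0:ℝ) 1 := by
    intro k hk
    constructor
    · positivity
    · rw [div_le_one hN0]; exact_mod_cast hk
  -- ratios
  set ρ : ℝ → ℕ → ℂ := fun u k => H (u, ((k:ℝ)+1)/N) / H (u, (k:ℝ)/N) with hρ
  have hρne : ∀ u k, ρ u k ≠ 0 := fun u k => div_ne_zero (Hne _) (Hne _)
  have hre : ∀ (u : ℝ) (k : ℕ), k < N → 0 < (ρ u k).re := by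
    intro u k hk
    have hd : ‖H (u, ((k:ℝ)+1)/N) - H (u, (k:ℝ)/N)‖ < δ := by
      apply hstep
      · exact_mod_cast hmemI (k+1) hk
      · exact hmemI k hk.le
      · rw [show ((k:ℝ)+1)/N - (k:ℝ)/N = 1/N by field_simp; ring]
        rw [_root_.abs_of_nonneg (by positivity)]
    have hlow : δ ≤ ‖H (u, (k:ℝ)/N)‖ := by
      rw [Hclamp]
      exact hmin _ ⟨⟨hcl0 u, hcl1 u⟩, hmemI k hk.le⟩
    have hrdiff : ‖ρ u k - 1‖ < 1 := by
      have h1 : ρ u k - 1 = (H (u, ((k:ℝ)+1)/N) - H (u, (k:ℝ)/N)) / H (u, (k:ℝ)/N) := by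
        simp only [hρ]
        rw [div_sub' (Hne _), mul_one]
      rw [h1, norm_div, div_lt_one (lt_of_lt_of_le hδ hlow)]
      exact lt_of_lt_of_le hd hlow
    have h2 := Complex.abs_re_le_norm (ρ u k - 1)
    rw [Complex.sub_re, Complex.one_re] at h2
    have := lt_of_le_of_lt h2 hrdiff
    rw [abs_lt] at this
    linarith [this.1]
  -- winding sum
  set W : ℝ → ℝ := fun u => ∑ k ∈ Finset.range N, (ρ u k).arg with hW
  have hWcont : Continuous W := by
    apply continuous_finset_sum
    intro k hk
    rw [Finset.mem_range] at hk
    rw [continuous_iff_continuousAt]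
    intro u
    have hρcont : Continuous fun u => ρ u k := by
      apply Continuous.div
      · exact Hcont.comp (continuous_id.prodMk continuous_const)
      · exact Hcont.comp (continuous_id.prodMk continuous_const)
      · exact fun u => Hne _
    show ContinuousAt (fun u => Complex.arg (ρ u k)) u
    exact ContinuousAt.comp (g := Complex.arg)
      (Complex.continuousAt_arg (Complex.mem_slitPlane_iff.2 (Or.inl (hre u k hk))))
      hρcont.continuousAt
  -- W u is an integer multiple of 2π
  have hloop : ∀ u, H (u, 1) = H (u, 0) := by
    intro u
    simp only [hH, he10]
  have htel : ∀ u, ∏ k ∈ Finset.range N, ρ u k = 1 := by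
    intro u
    have key : ∀ M : ℕ, M ≤ N → ∏ k ∈ Finset.range M, ρ u k = H (u, (M:ℝ)/N) / H (u, 0) := by
      intro M
      induction M with
      | zero => intro _; simp [div_self (Hne (u, (0:ℝ)))]
      | succ M ih =>
        intro hM
        rw [Finset.prod_range_succ, ih (by omega)]
        simp only [hρ]
        push_cast
        rw [div_mul_div_comm, mul_comm, mul_div_mul_right _ _ (Hne _)]
    have := key N le_rfl
    rw [div_self hN0.ne', hloop u] at this
    rw [this, div_self (Hne (u, 0))]
  have hint : ∀ u, ∃ m : ℤ, W u = m * (2 * Real.pi) := by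
    intro u
    have hsplit : (1:ℂ) = ((∏ k ∈ Finset.range N, ‖ρ u k‖ : ℝ) : ℂ)
        * Complex.exp ((W u : ℝ) * I) := by
      rw [← htel u]
      have : ∀ k ∈ Finset.range N, ρ u k
          = ((‖ρ u k‖ : ℝ) : ℂ) * Complex.exp (((ρ u k).arg : ℝ) * I) := by
        intro k _
        exact (Complex.norm_mul_exp_arg_mul_I _).symm
      rw [Finset.prod_congr rfl this, Finset.prod_mul_distrib, ← Complex.exp_sum,
        ← Finset.sum_mul]
      simp only [hW]
      push_cast
      ring
    have hrabs : (∏ k ∈ Finset.range N, ‖ρ u k‖ : ℝ) = 1 := by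
      have := congrArg (norm : ℂ → ℝ) hsplit
      rw [norm_one, norm_mul, Complex.norm_exp_ofReal_mul_I, mul_one, Complex.norm_real, Real.norm_eq_abs,
        _root_.abs_of_nonneg (Finset.prod_nonneg fun k _ => norm_nonneg _)] at this
      exact this.symm
    rw [hrabs] at hsplit
    rw [Complex.ofReal_one, one_mul] at hsplit
    obtain ⟨m, hm⟩ := Complex.exp_eq_one_iff.1 hsplit.symm
    refine ⟨m, ?_⟩
    have : ((W u : ℝ) : ℂ) = (m : ℂ) * (2 * (Real.pi : ℂ)) := by
      rw [show (m : ℂ) * (2 * (Real.pi:ℂ) * I) = ((m:ℂ) * (2 * (Real.pi:ℂ))) * I by ring] at hm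
      exact mul_right_cancel₀ Complex.I_ne_zero hm
    exact_mod_cast this
  -- W 0 = 0
  have hH0 : ∀ θ : ℝ, H (0, θ) = f 0 := by
    intro θ
    have hcl00 : cl (0:ℝ) = 0 := hcl_id 0 le_rfl zero_le_one
    simp only [hH, hcl00]
    norm_num
  have hW0 : W 0 = 0 := by
    simp only [hW]
    apply Finset.sum_eq_zero
    intro k _
    simp only [hρ, hH0]
    rw [div_self (by rw [← hH0 0]; exact Hne _)]
    exact Complex.arg_one
  -- W 1 = 2π
  have hH1 : ∀ θ : ℝ, H (1, θ) = -e θ := by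
    intro θ
    have hcl11 : cl (1:ℝ) = 1 := hcl_id 1 zero_le_one le_rfl
    simp only [hH, hcl11]
    norm_num
  have hW1 : W 1 = 2 * Real.pi := by
    have harg : ∀ k : ℕ, k < N → (ρ 1 k).arg = 2 * Real.pi / N := by
      intro k hk
      have hrw : ρ 1 k = Complex.exp (((2 * Real.pi / N : ℝ) : ℂ) * I) := by
        simp only [hρ, hH1]
        rw [neg_div_neg_eq, he, ← Complex.exp_sub]
        congr 1
        push_cast
        field_simp
        ring
      rw [hrw, Complex.exp_mul_I]
      have hmem : (2 * Real.pi / N : ℝ) ∈ Set.Ioc (-Real.pi) Real.pi := by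
        constructor
        · have h0 : (0:ℝ) < 2 * Real.pi / N := by positivity
          linarith [Real.pi_pos]
        · rw [div_le_iff₀ hN0]
          have : (3:ℝ) ≤ N := by exact_mod_cast hN3
          nlinarith [Real.pi_pos]
      have := Complex.arg_cos_add_sin_mul_I hmem
      rw [← Complex.ofReal_cos, ← Complex.ofReal_sin] at this
      rw [← Complex.ofReal_cos, ← Complex.ofReal_sin]
      exact this
    simp only [hW]
    rw [Finset.sum_congr rfl (fun k hk => harg k (Finset.mem_range.1 hk))]
    rw [Finset.sum_const, Finset.card_range, nsmul_eq_mul]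
    field_simp
  have := int_mult_constant hWcont hint
  rw [hW0, hW1] at this
  nlinarith [Real.pi_pos]

theorem stmt_18 (n : ℕ) (hn : 3 ≤ n) (r ε Λ : ℝ) (hr : 0 < r) (hε : 0 < ε) (hΛ : 0 < Λ)
    (F G : ℝ × ℝ → ℝ) (hF : Continuous F) (hG : Continuous G)
    (hbound : ∀ b lam : ℝ, |b| ≤ 1 / 2 → |lam| ≤ Λ →
      |F (b, lam)| + |G (b, lam)| / ((n : ℝ) - 2) ≤ 1 / 2 ∧
      ε ^ 2 / 2 + r ^ ((n : ℝ) - 2) * |G (b, lam)| / ((n : ℝ) - 2) ≤ Λ) :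
    ∃ b lam : ℝ, |b| ≤ 1 / 2 ∧ |lam| ≤ Λ ∧
      b + (ε ^ 2 / (4 * (1 + b)) - lam) * r ^ (2 - (n : ℝ)) = F (b, lam) ∧
      (2 - (n : ℝ)) * (ε ^ 2 / (4 * (1 + b)) - lam) * r ^ (2 - (n : ℝ)) = G (b, lam) := by
  have hn' : (1:ℝ) ≤ (n:ℝ) - 2 := by
    have : (3:ℝ) ≤ (n:ℝ) := by exact_mod_cast hn
    linarith
  have hnpos : (0:ℝ) < (n:ℝ) - 2 := by linarith
  set c : ℝ := r ^ ((n : ℝ) - 2) with hc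
  have hcpos : 0 < c := Real.rpow_pos_of_pos hr _
  -- clamping maps
  set clB : ℝ → ℝ := fun x => max (-(1/2)) (min (1/2) x) with hclB
  set clL : ℝ → ℝ := fun x => max (-Λ) (min Λ x) with hclL
  have hclBabs : ∀ x, |clB x| ≤ 1/2 := by
    intro x
    rw [abs_le]
    constructor
    · exact le_max_left _ _
    · exact max_le (by norm_num) (min_le_left _ _)
  have hclLabs : ∀ x, |clL x| ≤ Λ := by
    intro x
    rw [abs_le]
    constructor
    · exact le_max_left _ _
    · exact max_le (by linarith) (min_le_left _ _)
  have hclBid : ∀ x, |x| ≤ 1/2 → clB x = x := by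
    intro x hx
    rw [abs_le] at hx
    simp only [hclB]
    rw [min_eq_right hx.2, max_eq_right hx.1]
  have hclLid : ∀ x, |x| ≤ Λ → clL x = x := by
    intro x hx
    rw [abs_le] at hx
    simp only [hclL]
    rw [min_eq_right hx.2, max_eq_right hx.1]
  have hclBcont : Continuous clB := continuous_const.max (continuous_const.min continuous_id)
  have hclLcont : Continuous clL := continuous_const.max (continuous_const.min continuous_id)
  -- the fixed point map
  set T : ℝ × ℝ → ℝ × ℝ := fun p =>
    (F (clB p.1, clL p.2) + G (clB p.1, clL p.2) / ((n:ℝ) - 2),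
     ε ^ 2 / (4 * (1 + clB p.1)) + c * G (clB p.1, clL p.2) / ((n:ℝ) - 2)) with hT
  have hqcont : Continuous fun p : ℝ × ℝ => (clB p.1, clL p.2) :=
    (hclBcont.comp continuous_fst).prodMk (hclLcont.comp continuous_snd)
  have hdenom : ∀ x : ℝ, (4 * (1 + clB x) : ℝ) ≠ 0 := by
    intro x
    have := hclBabs x
    rw [abs_le] at this
    nlinarith [this.1]
  have hTcont : Continuous T := by
    apply Continuous.prodMk
    · exact (hF.comp hqcont).add ((hG.comp hqcont).div_const _)
    · apply Continuous.add
      · exact continuous_const.div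
          (continuous_const.mul (continuous_const.add (hclBcont.comp continuous_fst)))
          (fun p => hdenom p.1)
      · exact (continuous_const.mul (hG.comp hqcont)).div_const _
  -- T maps into D
  have hTD : ∀ p : ℝ × ℝ, |(T p).1| ≤ 1/2 ∧ |(T p).2| ≤ Λ := by
    intro p
    obtain ⟨hb1, hb2⟩ := hbound (clB p.1) (clL p.2) (hclBabs p.1) (hclLabs p.2)
    have hBlo : -(1/2 : ℝ) ≤ clB p.1 := (abs_le.1 (hclBabs p.1)).1
    have hpos1 : (0:ℝ) < 4 * (1 + clB p.1) := by nlinarith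
    have hfirst : ε ^ 2 / (4 * (1 + clB p.1)) ≤ ε ^ 2 / 2 :=
      div_le_div_of_nonneg_left (sq_nonneg ε) (by norm_num) (by nlinarith)
    constructor
    · simp only [hT]
      refine le_trans (abs_add_le _ _) ?_
      rw [abs_div, abs_of_pos hnpos]
      exact hb1
    · simp only [hT]
      refine le_trans (abs_add_le _ _) ?_
      rw [_root_.abs_of_nonneg (le_of_lt (div_pos (by positivity) hpos1)),
        abs_div, abs_of_pos hnpos, abs_mul, abs_of_pos hcpos]
      calc ε ^ 2 / (4 * (1 + clB p.1)) + c * |G (clB p.1, clL p.2)| / ((n:ℝ) - 2)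
          ≤ ε ^ 2 / 2 + c * |G (clB p.1, clL p.2)| / ((n:ℝ) - 2) := by linarith
        _ ≤ Λ := hb2
  -- transfer to the complex disc
  set R : ℝ := 1 + Λ with hR
  have hRpos : (0:ℝ) < R := by linarith
  set f : ℂ → ℂ := fun z =>
    (((T (R * z.re, R * z.im)).1 / R : ℝ) : ℂ) + (((T (R * z.re, R * z.im)).2 / R : ℝ) : ℂ) * Complex.I
    with hf
  have hzc : Continuous fun z : ℂ => ((R * z.re, R * z.im) : ℝ × ℝ) :=
    (continuous_const.mul Complex.continuous_re).prodMk (continuous_const.mul Complex.continuous_im)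
  have hfc : Continuous f := by
    apply Continuous.add
    · exact Complex.continuous_ofReal.comp ((continuous_fst.comp (hTcont.comp hzc)).div_const _)
    · exact (Complex.continuous_ofReal.comp
        ((continuous_snd.comp (hTcont.comp hzc)).div_const _)).mul continuous_const
  have hfb : ∀ z : ℂ, ‖z‖ ≤ 1 → ‖f z‖ ≤ 1 := by
    intro z _
    obtain ⟨h1, h2⟩ := hTD (R * z.re, R * z.im)
    have := Complex.norm_le_abs_re_add_abs_im (f z)
    have hre : (f z).re = (T (R * z.re, R * z.im)).1 / R := by
      simp only [hf, Complex.add_re, Complex.ofReal_re, Complex.mul_re, Complex.I_re,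
        Complex.I_im, Complex.ofReal_im, mul_zero, mul_one, zero_mul, sub_zero, add_zero,
        zero_sub, neg_zero]
    have him : (f z).im = (T (R * z.re, R * z.im)).2 / R := by
      simp only [hf, Complex.add_im, Complex.ofReal_im, Complex.mul_im, Complex.I_re,
        Complex.I_im, Complex.ofReal_re, mul_zero, mul_one, zero_mul, sub_zero, add_zero,
        zero_add, neg_zero]
    rw [hre, him] at this
    rw [abs_div, abs_div, abs_of_pos hRpos] at this
    refine le_trans this ?_
    rw [← add_div, div_le_one hRpos]
    linarith
  obtain ⟨z, hz1, hzfix⟩ := brouwer_disc f hfc hfb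
  set p : ℝ × ℝ := (R * z.re, R * z.im) with hp
  have hfixp : T p = p := by
    have hre := congrArg Complex.re hzfix
    have him := congrArg Complex.im hzfix
    simp only [hf, Complex.add_re, Complex.ofReal_re, Complex.mul_re, Complex.I_re,
      Complex.I_im, Complex.ofReal_im, mul_zero, mul_one, zero_mul, sub_zero, add_zero,
      zero_sub, neg_zero, Complex.add_im, Complex.mul_im, Complex.ofReal_im, zero_add] at hre him
    rw [div_eq_iff hRpos.ne'] at hre him
    rw [Prod.ext_iff]
    constructor
    · show (T p).1 = p.1
      simp only [hp]
      rw [hre]; ring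
    · show (T p).2 = p.2
      simp only [hp]
      rw [him]; ring
  have hD : |p.1| ≤ 1/2 ∧ |p.2| ≤ Λ := by
    rw [← hfixp]
    exact hTD p
  have hclBp : clB p.1 = p.1 := hclBid _ hD.1
  have hclLp : clL p.2 = p.2 := hclLid _ hD.2
  have heq1 : p.1 = F (p.1, p.2) + G (p.1, p.2) / ((n:ℝ) - 2) := by
    have := congrArg Prod.fst hfixp
    simp only [hT, hclBp, hclLp] at this
    exact this.symm
  have heq2 : p.2 = ε ^ 2 / (4 * (1 + p.1)) + c * G (p.1, p.2) / ((n:ℝ) - 2) := by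
    have := congrArg Prod.snd hfixp
    simp only [hT, hclBp, hclLp] at this
    exact this.symm
  have h2n : ((n:ℝ) - 2) ≠ 0 := hnpos.ne'
  have hrinv : r ^ (2 - (n:ℝ)) * c = 1 := by
    rw [hc, ← Real.rpow_add hr, show (2 - (n:ℝ)) + ((n:ℝ) - 2) = 0 by ring, Real.rpow_zero]
  have hkey : (ε ^ 2 / (4 * (1 + p.1)) - p.2) * r ^ (2 - (n:ℝ))
      = -(G (p.1, p.2) / ((n:ℝ) - 2)) := by
    have hs : ε ^ 2 / (4 * (1 + p.1)) - p.2 = -(c * G (p.1, p.2) / ((n:ℝ) - 2)) := by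
      linarith [heq2]
    rw [hs, show -(c * G (p.1, p.2) / ((n:ℝ) - 2)) * r ^ (2 - (n:ℝ))
      = -(G (p.1, p.2) / ((n:ℝ) - 2)) * (r ^ (2 - (n:ℝ)) * c) by ring, hrinv, mul_one]
  refine ⟨p.1, p.2, hD.1, hD.2, ?_, ?_⟩
  · rw [hkey]
    linarith [heq1]
  · rw [mul_assoc, hkey]
    field_simp
    ring
end

section
/- Let n ≥ 2 be an integer, let r > 0, and let F, G be real numbers with S := G + (n−1)·F > 0. Let A, W, B, B' > 0, set D = {(a, ω) ∈ ℝ × ℝ : |a| ≤ A and |ω| ≤ W}, and let H, H' : ℝ × ℝ → ℝ be continuous functions with |H(a,ω)| ≤ B and |H'(a,ω)| ≤ B' for all (a, ω) ∈ D. If (B' + (n−1)·B)/(S·r) ≤ A and |F|·(B' + (n−1)·B)/S + B ≤ W, then there exists (a, ω) ∈ D such that F·r·a − ω = H(a,ω) and G·r·a − (1−n)·ω = H'(a,ω). -/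
def chi (u v : Fin 3) : ZMod 2 := if (u = 0 ∧ v = 1) ∨ (u = 1 ∧ v = 0) then 1 else 0

lemma tele (g : ℕ → ZMod 2) (N : ℕ) : ∑ j ∈ Finset.range N, (g j + g (j+1)) = g 0 + g N := by
  induction N with
  | zero => simp [CharTwo.add_self_eq_zero]
  | succ N ih =>
    rw [Finset.sum_range_succ, ih]
    have h2 : (2 : ZMod 2) = 0 := by decide
    ring_nf
    rw [h2]
    ring

lemma chi_ne_one {u v : Fin 3} (hu : u ≠ 1) (hv : v ≠ 1) : chi u v = 0 := by
  revert hu hv; revert u v; decide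

lemma chi_ne_zero {u v : Fin 3} (hu : u ≠ 0) (hv : v ≠ 0) : chi u v = 0 := by
  revert hu hv; revert u v; decide

lemma chi_eq_b {u v : Fin 3} (hu : u ≠ 2) (hv : v ≠ 2) :
    chi u v = (if u = 1 then (1 : ZMod 2) else 0) + (if v = 1 then 1 else 0) := by
  revert hu hv; revert u v; decide

lemma full_of_odd {u v w : Fin 3} (h : chi u v + chi v w + chi u w ≠ 0) :
    ∀ k : Fin 3, k = u ∨ k = v ∨ k = w := by
  revert h; revert u v w; decide

lemma sperner_square (N : ℕ) (hN : 0 < N) (l : ℕ → ℕ → Fin 3)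
    (hleft : ∀ j, j ≤ N → l 0 j = 0)
    (hright : ∀ j, j ≤ N → l N j ≠ 0)
    (hbot : ∀ i, i ≤ N → l i 0 ≠ 2)
    (htop : ∀ i, i ≤ N → l i N ≠ 1) :
    ∃ i j, i < N ∧ j < N ∧ ∀ k : Fin 3,
      l i j = k ∨ l (i+1) j = k ∨ l i (j+1) = k ∨ l (i+1) (j+1) = k := by
  classical
  set X : ℕ → ℕ → ZMod 2 := fun i j => chi (l i j) (l (i+1) j) with hX
  set Y : ℕ → ℕ → ZMod 2 := fun i j => chi (l i j) (l i (j+1)) with hY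
  set cL : ℕ → ℕ → ZMod 2 := fun i j =>
    chi (l i j) (l (i+1) j) + chi (l (i+1) j) (l (i+1) (j+1)) + chi (l i j) (l (i+1) (j+1))
    with hcL
  set cU : ℕ → ℕ → ZMod 2 := fun i j =>
    chi (l i j) (l i (j+1)) + chi (l i (j+1)) (l (i+1) (j+1)) + chi (l i j) (l (i+1) (j+1))
    with hcU
  have key : ∑ i ∈ Finset.range N, ∑ j ∈ Finset.range N, (cL i j + cU i j) = 1 := by
    have hsplit : ∀ i j : ℕ, cL i j + cU i j =
        (X i j + X i (j+1)) + (Y i j + Y (i+1) j) := by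
      intro i j
      have h2 : (2 : ZMod 2) = 0 := by decide
      simp only [hcL, hcU, hX, hY]
      ring_nf
      rw [h2]; ring
    have step1 : ∑ i ∈ Finset.range N, ∑ j ∈ Finset.range N, (cL i j + cU i j)
        = (∑ i ∈ Finset.range N, ∑ j ∈ Finset.range N, (X i j + X i (j+1)))
        + ∑ j ∈ Finset.range N, ∑ i ∈ Finset.range N, (Y i j + Y (i+1) j) := by
      rw [Finset.sum_comm (f := fun j i => Y i j + Y (i+1) j), ← Finset.sum_add_distrib]
      exact Finset.sum_congr rfl fun i _ => by
        rw [← Finset.sum_add_distrib]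
        exact Finset.sum_congr rfl fun j _ => hsplit i j
    rw [step1]
    have hHsum : ∑ i ∈ Finset.range N, ∑ j ∈ Finset.range N, (X i j + X i (j+1))
        = ∑ i ∈ Finset.range N, (X i 0 + X i N) :=
      Finset.sum_congr rfl fun i _ => tele (fun j => X i j) N
    have hVsum : ∑ j ∈ Finset.range N, ∑ i ∈ Finset.range N, (Y i j + Y (i+1) j)
        = ∑ j ∈ Finset.range N, (Y 0 j + Y N j) :=
      Finset.sum_congr rfl fun j _ => tele (fun i => Y i j) N
    rw [hHsum, hVsum]
    have hV0 : ∑ j ∈ Finset.range N, (Y 0 j + Y N j) = 0 := by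
      apply Finset.sum_eq_zero
      intro j hj
      have hj' := Finset.mem_range.1 hj
      have e1 : Y 0 j = 0 := by
        simp only [hY]
        rw [hleft j (Nat.le_of_lt hj'), hleft (j+1) hj']
        decide
      have e2 : Y N j = 0 := by
        simp only [hY]
        exact chi_ne_zero (hright j (Nat.le_of_lt hj')) (hright (j+1) hj')
      rw [e1, e2, add_zero]
    rw [hV0, add_zero]
    have hTop : ∀ i, i < N → X i N = 0 := fun i hi => by
      simp only [hX]
      exact chi_ne_one (htop i (Nat.le_of_lt hi)) (htop (i+1) hi)
    have hBotEq : ∀ i, i < N → X i 0 =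
        (if l i 0 = 1 then (1:ZMod 2) else 0) + (if l (i+1) 0 = 1 then 1 else 0) := by
      intro i hi
      simp only [hX]
      exact chi_eq_b (hbot i (Nat.le_of_lt hi)) (hbot (i+1) hi)
    calc ∑ i ∈ Finset.range N, (X i 0 + X i N)
        = ∑ i ∈ Finset.range N,
            ((if l i 0 = 1 then (1:ZMod 2) else 0) + (if l (i+1) 0 = 1 then 1 else 0)) := by
          apply Finset.sum_congr rfl
          intro i hi
          have hi' := Finset.mem_range.1 hi
          rw [hTop i hi', add_zero, hBotEq i hi']
      _ = (if l 0 0 = 1 then (1:ZMod 2) else 0) + (if l N 0 = 1 then 1 else 0) :=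
          tele (fun i => if l i 0 = 1 then (1:ZMod 2) else 0) N
      _ = 1 := by
          have h00 : l 0 0 = 0 := hleft 0 (Nat.zero_le N)
          have hN0 : l N 0 = 1 := by
            have hx : l N 0 ≠ 0 := hright 0 (Nat.zero_le N)
            have hy : l N 0 ≠ 2 := hbot N le_rfl
            revert hx hy
            generalize l N 0 = u
            revert u; decide
          rw [h00, hN0]
          decide
  by_contra hcon
  push_neg at hcon
  have hz : ∀ i ∈ Finset.range N, ∑ j ∈ Finset.range N, (cL i j + cU i j) = 0 := by
    intro i hi
    apply Finset.sum_eq_zero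
    intro j hj
    have hi' := Finset.mem_range.1 hi
    have hj' := Finset.mem_range.1 hj
    obtain ⟨k, hk⟩ := hcon i j hi' hj'
    have hL : cL i j = 0 := by
      by_contra h
      have := full_of_odd (u := l i j) (v := l (i+1) j) (w := l (i+1) (j+1)) h k
      tauto
    have hU : cU i j = 0 := by
      by_contra h
      have := full_of_odd (u := l i j) (v := l i (j+1)) (w := l (i+1) (j+1)) h k
      tauto
    rw [hL, hU, add_zero]
  rw [Finset.sum_congr rfl hz, Finset.sum_const, smul_zero] at key
  exact one_ne_zero key.symm

set_option maxHeartbeats 1000000 in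
lemma brouwer_rect (A W : ℝ) (hA : 0 < A) (hW : 0 < W) (φ : ℝ × ℝ → ℝ × ℝ)
    (hφc : Continuous φ)
    (hself : ∀ p : ℝ × ℝ, |p.1| ≤ A → |p.2| ≤ W → |(φ p).1| ≤ A ∧ |(φ p).2| ≤ W) :
    ∃ p : ℝ × ℝ, |p.1| ≤ A ∧ |p.2| ≤ W ∧ φ p = p := by
  classical
  have main : ∀ k : ℕ, ∃ q P0 P1 P2 : ℝ × ℝ,
      (|q.1| ≤ A ∧ |q.2| ≤ W) ∧
      dist P0 q ≤ (2*A+2*W) * (1/((k:ℝ)+1)) ∧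
      dist P1 q ≤ (2*A+2*W) * (1/((k:ℝ)+1)) ∧
      dist P2 q ≤ (2*A+2*W) * (1/((k:ℝ)+1)) ∧
      0 < (1 - 1/((k:ℝ)+1)) * (φ P0).1 - P0.1 ∧
      ((1 - 1/((k:ℝ)+1)) * (φ P1).1 - P1.1 ≤ 0 ∧ 0 < (1 - 1/((k:ℝ)+1)) * (φ P1).2 - P1.2) ∧
      ((1 - 1/((k:ℝ)+1)) * (φ P2).1 - P2.1 ≤ 0 ∧ (1 - 1/((k:ℝ)+1)) * (φ P2).2 - P2.2 ≤ 0) := by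
    intro k
    set Nr : ℝ := (k:ℝ) + 1 with hNrdef
    have hNr : 0 < Nr := by positivity
    set δ : ℝ := 1 / Nr with hδdef
    have hδpos : 0 < δ := by positivity
    have h1δ : 0 ≤ 1 - δ := by
      have : δ ≤ 1 := by
        rw [hδdef, div_le_one hNr, hNrdef]
        simp
      linarith
    set G : ℕ → ℕ → ℝ × ℝ := fun i j => (-A + 2*A*i/Nr, -W + 2*W*j/Nr) with hG
    have hGD : ∀ i j : ℕ, i ≤ k+1 → j ≤ k+1 → |(G i j).1| ≤ A ∧ |(G i j).2| ≤ W := by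
      intro i j hi hj
      have hi' : (i:ℝ) ≤ Nr := by
        rw [hNrdef]
        exact_mod_cast Nat.cast_le.2 hi |>.trans_eq (by push_cast; ring)
      have hj' : (j:ℝ) ≤ Nr := by
        rw [hNrdef]
        exact_mod_cast Nat.cast_le.2 hj |>.trans_eq (by push_cast; ring)
      have hi0 : (0:ℝ) ≤ (i:ℝ) := Nat.cast_nonneg i
      have hj0 : (0:ℝ) ≤ (j:ℝ) := Nat.cast_nonneg j
      constructor
      · rw [abs_le]
        constructor
        · have : 0 ≤ 2*A*i/Nr := by positivity
          simp only [hG]; linarith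
        · have h1 : (i:ℝ)/Nr ≤ 1 := (div_le_one hNr).2 hi'
          have h0 : 0 ≤ (i:ℝ)/Nr := by positivity
          simp only [hG]
          have e : 2*A*(i:ℝ)/Nr = 2*A*((i:ℝ)/Nr) := by ring
          rw [e]; nlinarith
      · rw [abs_le]
        constructor
        · have : 0 ≤ 2*W*j/Nr := by positivity
          simp only [hG]; linarith
        · have h1 : (j:ℝ)/Nr ≤ 1 := (div_le_one hNr).2 hj'
          have h0 : 0 ≤ (j:ℝ)/Nr := by positivity
          simp only [hG]
          have e : 2*W*(j:ℝ)/Nr = 2*W*((j:ℝ)/Nr) := by ring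
          rw [e]; nlinarith
    have hφb : ∀ i j : ℕ, i ≤ k+1 → j ≤ k+1 →
        |(φ (G i j)).1| ≤ A ∧ |(φ (G i j)).2| ≤ W := fun i j hi hj =>
      hself _ (hGD i j hi hj).1 (hGD i j hi hj).2
    set lab : ℕ → ℕ → Fin 3 := fun i j =>
      if 0 < (1-δ) * (φ (G i j)).1 - (G i j).1 then 0
      else if 0 < (1-δ) * (φ (G i j)).2 - (G i j).2 then 1 else 2 with hlab
    have lab0 : ∀ a b : ℕ, lab a b = 0 → 0 < (1-δ) * (φ (G a b)).1 - (G a b).1 := by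
      intro a b h
      simp only [hlab] at h
      split_ifs at h with h1 h2
      · exact h1
      · exact absurd h (by decide)
      · exact absurd h (by decide)
    have lab1 : ∀ a b : ℕ, lab a b = 1 →
        (1-δ) * (φ (G a b)).1 - (G a b).1 ≤ 0 ∧ 0 < (1-δ) * (φ (G a b)).2 - (G a b).2 := by
      intro a b h
      simp only [hlab] at h
      split_ifs at h with h1 h2
      · exact absurd h (by decide)
      · exact ⟨le_of_not_gt h1, h2⟩
      · exact absurd h (by decide)
    have lab2 : ∀ a b : ℕ, lab a b = 2 →
        (1-δ) * (φ (G a b)).1 - (G a b).1 ≤ 0 ∧ (1-δ) * (φ (G a b)).2 - (G a b).2 ≤ 0 := by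
      intro a b h
      simp only [hlab] at h
      split_ifs at h with h1 h2
      · exact absurd h (by decide)
      · exact absurd h (by decide)
      · exact ⟨le_of_not_gt h1, le_of_not_gt h2⟩
    -- boundary conditions
    have hleft : ∀ j, j ≤ k+1 → lab 0 j = 0 := by
      intro j hj
      have e : (G 0 j).1 = -A := by simp [hG]
      have hb := (hφb 0 j (Nat.zero_le _) hj).1
      have hl : -A ≤ (φ (G 0 j)).1 := (abs_le.1 hb).1
      have hpos : 0 < (1-δ) * (φ (G 0 j)).1 - (G 0 j).1 := by
        rw [e]
        nlinarith [mul_nonneg h1δ (by linarith : (0:ℝ) ≤ (φ (G 0 j)).1 + A),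
          mul_pos hδpos hA]
      simp only [hlab]
      rw [if_pos hpos]
    have hcast : ((k+1:ℕ):ℝ) = Nr := by rw [hNrdef]; push_cast; ring
    have hright : ∀ j, j ≤ k+1 → lab (k+1) j ≠ 0 := by
      intro j hj
      have e : (G (k+1) j).1 = A := by
        simp only [hG, hcast]
        field_simp
        ring
      have hb := (hφb (k+1) j le_rfl hj).1
      have hu : (φ (G (k+1) j)).1 ≤ A := (abs_le.1 hb).2
      have hneg : ¬ (0 < (1-δ) * (φ (G (k+1) j)).1 - (G (k+1) j).1) := by
        rw [e, not_lt]
        nlinarith [mul_nonneg h1δ (by linarith : (0:ℝ) ≤ A - (φ (G (k+1) j)).1),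
          mul_pos hδpos hA]
      simp only [hlab]
      rw [if_neg hneg]
      split_ifs <;> decide
    have hbotc : ∀ i, i ≤ k+1 → lab i 0 ≠ 2 := by
      intro i hi
      have e : (G i 0).2 = -W := by simp [hG]
      have hb := (hφb i 0 hi (Nat.zero_le _)).2
      have hl : -W ≤ (φ (G i 0)).2 := (abs_le.1 hb).1
      have hpos : 0 < (1-δ) * (φ (G i 0)).2 - (G i 0).2 := by
        rw [e]
        nlinarith [mul_nonneg h1δ (by linarith : (0:ℝ) ≤ (φ (G i 0)).2 + W),
          mul_pos hδpos hW]
      simp only [hlab]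
      by_cases h1 : 0 < (1-δ) * (φ (G i 0)).1 - (G i 0).1
      · rw [if_pos h1]; decide
      · rw [if_neg h1, if_pos hpos]; decide
    have htopc : ∀ i, i ≤ k+1 → lab i (k+1) ≠ 1 := by
      intro i hi
      have e : (G i (k+1)).2 = W := by
        simp only [hG, hcast]
        field_simp
        ring
      have hb := (hφb i (k+1) hi le_rfl).2
      have hu : (φ (G i (k+1))).2 ≤ W := (abs_le.1 hb).2
      have hneg : ¬ (0 < (1-δ) * (φ (G i (k+1))).2 - (G i (k+1)).2) := by
        rw [e, not_lt]
        nlinarith [mul_nonneg h1δ (by linarith : (0:ℝ) ≤ W - (φ (G i (k+1))).2),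
          mul_pos hδpos hW]
      simp only [hlab]
      by_cases h1 : 0 < (1-δ) * (φ (G i (k+1))).1 - (G i (k+1)).1
      · rw [if_pos h1]; decide
      · rw [if_neg h1, if_neg hneg]; decide
    obtain ⟨i, j, hi, hj, hfull⟩ :=
      sperner_square (k+1) (Nat.succ_pos k) lab hleft hright hbotc htopc
    have hget : ∀ v : Fin 3, ∃ a b : ℕ, a ≤ 1 ∧ b ≤ 1 ∧ lab (i+a) (j+b) = v := by
      intro v
      rcases hfull v with h | h | h | h
      · exact ⟨0, 0, Nat.zero_le _, Nat.zero_le _, h⟩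
      · exact ⟨1, 0, le_rfl, Nat.zero_le _, h⟩
      · exact ⟨0, 1, Nat.zero_le _, le_rfl, h⟩
      · exact ⟨1, 1, le_rfl, le_rfl, h⟩
    have hdist : ∀ a b : ℕ, a ≤ 1 → b ≤ 1 →
        dist (G (i+a) (j+b)) (G i j) ≤ (2*A+2*W) * δ := by
      intro a b ha hb
      have ha' : (a:ℝ) ≤ 1 := by exact_mod_cast ha
      have hb' : (b:ℝ) ≤ 1 := by exact_mod_cast hb
      have ha0 : (0:ℝ) ≤ (a:ℝ) := Nat.cast_nonneg a
      have hb0 : (0:ℝ) ≤ (b:ℝ) := Nat.cast_nonneg b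
      rw [Prod.dist_eq]
      have hδe : (2*A+2*W) * δ = (2*A+2*W) / Nr := by rw [hδdef, mul_one_div]
      apply max_le
      · rw [Real.dist_eq]
        have e : (G (i+a) (j+b)).1 - (G i j).1 = 2*A*(a:ℝ)/Nr := by
          simp only [hG]
          push_cast
          ring
        rw [e, hδe, abs_of_nonneg (by positivity)]
        apply div_le_div_of_nonneg_right ?_ hNr.le |>.trans_eq rfl
        nlinarith
      · rw [Real.dist_eq]
        have e : (G (i+a) (j+b)).2 - (G i j).2 = 2*W*(b:ℝ)/Nr := by
          simp only [hG]
          push_cast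
          ring
        rw [e, hδe, abs_of_nonneg (by positivity)]
        apply div_le_div_of_nonneg_right ?_ hNr.le |>.trans_eq rfl
        nlinarith
    obtain ⟨a0, b0, ha0, hb0, hl0⟩ := hget 0
    obtain ⟨a1, b1, ha1, hb1, hl1⟩ := hget 1
    obtain ⟨a2, b2, ha2, hb2, hl2⟩ := hget 2
    exact ⟨G i j, G (i+a0) (j+b0), G (i+a1) (j+b1), G (i+a2) (j+b2),
      hGD i j (Nat.le_of_lt hi) (Nat.le_of_lt hj),
      hdist a0 b0 ha0 hb0, hdist a1 b1 ha1 hb1, hdist a2 b2 ha2 hb2,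
      lab0 _ _ hl0, lab1 _ _ hl1, lab2 _ _ hl2⟩
  -- limit argument
  choose q P0 P1 P2 hqD hd0 hd1 hd2 hs0 hs1 hs2 using main
  have hcomp : IsCompact {p : ℝ × ℝ | |p.1| ≤ A ∧ |p.2| ≤ W} := by
    have he : {p : ℝ × ℝ | |p.1| ≤ A ∧ |p.2| ≤ W}
        = (Set.Icc (-A) A) ×ˢ (Set.Icc (-W) W) := by
      ext p
      simp only [Set.mem_setOf_eq, Set.mem_prod, Set.mem_Icc, abs_le]
    rw [he]
    exact isCompact_Icc.prod isCompact_Icc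
  obtain ⟨x, hxD, κ, hκ, hqlim⟩ := hcomp.tendsto_subseq (fun k => hqD k)
  have hκtop : Filter.Tendsto κ Filter.atTop Filter.atTop := hκ.tendsto_atTop
  have hdκ : Filter.Tendsto (fun m => 1/((κ m : ℝ)+1)) Filter.atTop (nhds 0) :=
    tendsto_one_div_add_atTop_nhds_zero_nat.comp hκtop
  have hPlim : ∀ P : ℕ → ℝ × ℝ,
      (∀ k, dist (P k) (q k) ≤ (2*A+2*W) * (1/((k:ℝ)+1))) →
      Filter.Tendsto (fun m => P (κ m)) Filter.atTop (nhds x) := by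
    intro P hP
    have hdist0 : Filter.Tendsto (fun m => dist (q (κ m)) (P (κ m)))
        Filter.atTop (nhds 0) := by
      apply squeeze_zero (fun m => dist_nonneg) (g := fun m => (2*A+2*W) * (1/((κ m:ℝ)+1)))
      · intro m
        rw [dist_comm]
        exact hP (κ m)
      · simpa using hdκ.const_mul (2*A+2*W)
    exact hqlim.congr_dist hdist0
  have key : ∀ (P : ℕ → ℝ × ℝ) (c : ℝ × ℝ → ℝ), Continuous c →
      Filter.Tendsto (fun m => P (κ m)) Filter.atTop (nhds x) →
      Filter.Tendsto (fun m => (1 - 1/((κ m : ℝ)+1)) * c (φ (P (κ m))) - c (P (κ m)))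
        Filter.atTop (nhds (c (φ x) - c x)) := by
    intro P c hc hPl
    have l1 : Filter.Tendsto (fun m => c (φ (P (κ m)))) Filter.atTop (nhds (c (φ x))) :=
      ((hc.comp hφc).tendsto x).comp hPl
    have l2 : Filter.Tendsto (fun m => c (P (κ m))) Filter.atTop (nhds (c x)) :=
      (hc.tendsto x).comp hPl
    have hone : Filter.Tendsto (fun _ : ℕ => (1:ℝ)) Filter.atTop (nhds 1) :=
      tendsto_const_nhds
    have := ((hone.sub hdκ).mul l1).sub l2
    simpa using this
  have k0 := key _ _ continuous_fst (hPlim P0 hd0)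
  have k1a := key _ _ continuous_fst (hPlim P1 hd1)
  have k1b := key _ _ continuous_snd (hPlim P1 hd1)
  have k2 := key _ _ continuous_snd (hPlim P2 hd2)
  have e1 : 0 ≤ (φ x).1 - x.1 := ge_of_tendsto' k0 (fun m => (hs0 (κ m)).le)
  have e2 : (φ x).1 - x.1 ≤ 0 := le_of_tendsto' k1a (fun m => (hs1 (κ m)).1)
  have e3 : 0 ≤ (φ x).2 - x.2 := ge_of_tendsto' k1b (fun m => ((hs1 (κ m)).2).le)
  have e4 : (φ x).2 - x.2 ≤ 0 := le_of_tendsto' k2 (fun m => (hs2 (κ m)).2)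
  exact ⟨x, hxD.1, hxD.2, Prod.ext (by linarith) (by linarith)⟩

theorem stmt_19 (n : ℕ) (hn : 2 ≤ n) (r : ℝ) (hr : 0 < r) (F G : ℝ)
    (hS : 0 < G + ((n : ℝ) - 1) * F)
    (A W B B' : ℝ) (hA : 0 < A) (hW : 0 < W) (hB : 0 < B) (hB' : 0 < B')
    (H H' : ℝ × ℝ → ℝ) (hH : Continuous H) (hH' : Continuous H')
    (hHb : ∀ a ω : ℝ, |a| ≤ A → |ω| ≤ W → |H (a, ω)| ≤ B)
    (hH'b : ∀ a ω : ℝ, |a| ≤ A → |ω| ≤ W → |H' (a, ω)| ≤ B')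
    (h1 : (B' + ((n : ℝ) - 1) * B) / ((G + ((n : ℝ) - 1) * F) * r) ≤ A)
    (h2 : |F| * (B' + ((n : ℝ) - 1) * B) / (G + ((n : ℝ) - 1) * F) + B ≤ W) :
    ∃ a ω : ℝ, |a| ≤ A ∧ |ω| ≤ W ∧
      F * r * a - ω = H (a, ω) ∧ G * r * a - (1 - (n : ℝ)) * ω = H' (a, ω) := by
  have hn1 : (2:ℝ) ≤ (n:ℝ) := by exact_mod_cast hn
  have hn0 : (0:ℝ) ≤ (n:ℝ) - 1 := by linarith
  set S : ℝ := G + ((n : ℝ) - 1) * F with hSdef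
  set X : ℝ × ℝ → ℝ := fun p => H' p + ((n:ℝ) - 1) * H p with hX
  set φ : ℝ × ℝ → ℝ × ℝ := fun p => (X p / (S * r), F * X p / S - H p) with hφ
  have hXc : Continuous X := hH'.add (continuous_const.mul hH)
  have hφc : Continuous φ :=
    Continuous.prodMk (hXc.div_const _) (((continuous_const.mul hXc).div_const _).sub hH)
  have hself : ∀ p : ℝ × ℝ, |p.1| ≤ A → |p.2| ≤ W → |(φ p).1| ≤ A ∧ |(φ p).2| ≤ W := by
    intro p h1p h2p
    have hHp : |H p| ≤ B := by
      have := hHb p.1 p.2 h1p h2p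
      simpa using this
    have hH'p : |H' p| ≤ B' := by
      have := hH'b p.1 p.2 h1p h2p
      simpa using this
    have hXp : |X p| ≤ B' + ((n:ℝ) - 1) * B := by
      simp only [hX]
      calc |H' p + ((n:ℝ) - 1) * H p| ≤ |H' p| + |((n:ℝ) - 1) * H p| := abs_add_le _ _
        _ ≤ B' + ((n:ℝ) - 1) * B := by
            rw [abs_mul, abs_of_nonneg hn0]
            have := mul_le_mul_of_nonneg_left hHp hn0
            linarith
    have hSr : 0 < S * r := mul_pos hS hr
    constructor
    · show |X p / (S * r)| ≤ A
      rw [abs_div, abs_of_pos hSr]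
      exact (div_le_div_of_nonneg_right hXp hSr.le).trans h1
    · show |F * X p / S - H p| ≤ W
      have habs : |F * X p / S - H p| ≤ |F * X p / S| + |H p| := abs_sub _ _
      have e : |F * X p / S| = |F| * |X p| / S := by
        rw [abs_div, abs_mul, abs_of_pos hS]
      have hm : |F| * |X p| ≤ |F| * (B' + ((n:ℝ) - 1) * B) :=
        mul_le_mul_of_nonneg_left hXp (abs_nonneg F)
      have hd : |F| * |X p| / S ≤ |F| * (B' + ((n:ℝ) - 1) * B) / S :=
        div_le_div_of_nonneg_right hm hS.le
      rw [e] at habs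
      linarith
  obtain ⟨p, hp1, hp2, hfix⟩ := brouwer_rect A W hA hW φ hφc hself
  refine ⟨p.1, p.2, hp1, hp2, ?_, ?_⟩
  · have hpe : (p.1, p.2) = p := rfl
    rw [hpe]
    have e1 : X p / (S * r) = p.1 := congrArg Prod.fst hfix
    have e2 : F * X p / S - H p = p.2 := congrArg Prod.snd hfix
    rw [← e1, ← e2]
    field_simp
    ring
  · have hpe : (p.1, p.2) = p := rfl
    rw [hpe]
    have e1 : X p / (S * r) = p.1 := congrArg Prod.fst hfix
    have e2 : F * X p / S - H p = p.2 := congrArg Prod.snd hfix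
    rw [← e1, ← e2]
    simp only [hX, hSdef]
    have hS0 : G + ((n:ℝ) - 1) * F ≠ 0 := hS.ne'
    field_simp
    ring
end
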